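/- Let z > 0, T > 0, θ₀ ≠ 0 with zθ₀ ∈ [−1, 0) ∪ (0, ∞), D = 3, and M_q(v) = 1/(z^{-1}exp(|v|²/(2T)) + θ₀). If ρ = ∫ M_q dv and 2ρe₀ = ∫ |v|² M_q dv, then (|Li_{3/2}(−zθ₀)|)^{5/2} / (|Li_{5/2}(−zθ₀)|)^{3/2} = |θ₀| ρ (3/(4π e₀))^{3/2}. -/

import Mathlib

open Real MeasureTheory Finset
open Set


lemma pow_half_integral (f : ℝ → ℝ) : ∫ r in Ioi (0:ℝ), r ^ 2 * f (r ^ 2) =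
    (1/2) * ∫ x in Ioi (0:ℝ), x ^ ((1:ℝ)/2) * f x := by
  rw [← integral_comp_rpow_Ioi_of_pos (g := fun x => x ^ ((1:ℝ)/2) * f x) (p := 2) (by norm_num),
    ← integral_const_mul]
  refine setIntegral_congr_fun measurableSet_Ioi fun x hx => ?_
  have hx0 : (0:ℝ) < x := hx
  have h2 : x ^ (2:ℝ) = x ^ (2:ℕ) := by rw [← Real.rpow_natCast x 2]; norm_num
  rw [smul_eq_mul, h2]
  have h3 : ((x:ℝ) ^ (2:ℕ)) ^ ((1:ℝ)/2) = x := by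
    rw [← Real.rpow_natCast x 2, ← Real.rpow_mul hx0.le]; norm_num
  have h4 : x ^ ((2:ℝ) - 1) = x := by norm_num
  rw [h3, h4]; ring

lemma sph3 (f : ℝ → ℝ) :
    ∫ v : Fin 3 → ℝ, f (∑ d, (v d) ^ 2) =
      (2 * π) * ∫ x in Ioi (0:ℝ), x ^ ((1:ℝ)/2) * f x := by
  have h1 : ∫ v : Fin 3 → ℝ, f (∑ d, (v d) ^ 2) =
      ∫ w : EuclideanSpace ℝ (Fin 3), f (‖w‖ ^ 2) := by
    rw [← (EuclideanSpace.volume_preserving_symm_measurableEquiv_toLp (ι := Fin 3)).integral_comp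
      (MeasurableEquiv.toLp 2 (Fin 3 → ℝ)).symm.measurableEmbedding
      (fun v => f (∑ d, (v d) ^ 2))]
    refine integral_congr_ae (Filter.Eventually.of_forall fun w => ?_)
    show f _ = f (‖w‖ ^ 2)
    congr 1
    rw [EuclideanSpace.norm_eq, Real.sq_sqrt (by positivity)]
    refine Finset.sum_congr rfl fun d _ => ?_
    rw [Real.norm_eq_abs, sq_abs]; rfl
  have hvol : (volume (Metric.ball (0:EuclideanSpace ℝ (Fin 3)) 1)).toReal = 4/3 * π := by
    rw [EuclideanSpace.volume_ball]
    have hΓ : Real.Gamma ((Fintype.card (Fin 3):ℝ)/2 + 1) = 3/4 * Real.sqrt π := by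
      simp only [Fintype.card_fin, Nat.cast_ofNat]
      rw [Real.Gamma_add_one (by norm_num)]
      have : (3:ℝ)/2 = 1/2 + 1 := by norm_num
      rw [this, Real.Gamma_add_one (by norm_num), Real.Gamma_one_half_eq]
      ring
    rw [hΓ]
    simp only [Fintype.card_fin, ENNReal.ofReal_one, one_pow, one_mul]
    rw [ENNReal.toReal_ofReal (by positivity)]
    have h5 : Real.sqrt π ^ 3 = π * Real.sqrt π := by
      rw [pow_succ, Real.sq_sqrt Real.pi_nonneg]
    rw [h5]
    have hs : Real.sqrt π ≠ 0 := by positivity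
    field_simp
  have hdim : Module.finrank ℝ (EuclideanSpace ℝ (Fin 3)) = 3 := finrank_euclideanSpace_fin
  rw [h1, integral_fun_norm_addHaar volume (fun r => f (r ^ 2))]
  rw [hdim, measureReal_def, hvol]
  have h6 : ∫ y in Ioi (0:ℝ), y ^ (3-1) • f (y^2) = ∫ y in Ioi (0:ℝ), y^2 * f (y^2) := rfl
  rw [h6, pow_half_integral f, nsmul_eq_mul, smul_eq_mul]
  push_cast
  ring


lemma substT (s T : ℝ) (hT : 0 < T) (h : ℝ → ℝ) :
    ∫ x in Ioi (0:ℝ), x ^ s * h (x / (2*T)) =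
      (2*T) ^ (s+1) * ∫ w in Ioi (0:ℝ), w ^ s * h w := by
  have h2T : (0:ℝ) < 2*T := by linarith
  have := integral_comp_mul_left_Ioi (g := fun x => x ^ s * h (x / (2*T))) 0 h2T
  rw [mul_zero] at this
  rw [show (∫ x in Ioi (0:ℝ), x ^ s * h (x / (2*T))) =
      (2*T) • ∫ x in Ioi (0:ℝ), (fun x => x ^ s * h (x / (2*T))) ((2*T) * x) from by
    rw [this, smul_smul, mul_inv_cancel₀ h2T.ne', one_smul]]
  rw [smul_eq_mul, ← integral_const_mul, ← integral_const_mul]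
  refine setIntegral_congr_fun measurableSet_Ioi fun w hw => ?_
  have hw0 : (0:ℝ) < w := hw
  simp only
  rw [mul_comm (2*T) w, mul_div_assoc, div_self h2T.ne', mul_one,
    Real.mul_rpow hw0.le h2T.le, Real.rpow_add h2T, Real.rpow_one]
  ring

lemma denomPos {y x : ℝ} (hy : y ≤ 1) (hx : 0 < x) : 0 < Real.exp x - y := by
  have : 1 < Real.exp x := by
    rw [← Real.exp_zero]; exact Real.exp_lt_exp.mpr hx
  linarith

lemma intLem {s y : ℝ} (hs : 0 < s) (hy : y ≤ 1) :
    IntegrableOn (fun x => x ^ s / (Real.exp x - y)) (Ioi (0:ℝ)) := by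
  have hmeas : Measurable (fun x : ℝ => x ^ s / (Real.exp x - y)) := by
    exact (measurable_id.pow_const s).div ((Real.measurable_exp).sub measurable_const)
  rw [← Ioc_union_Ioi_eq_Ioi (zero_le_one' ℝ)]
  refine IntegrableOn.union ?_ ?_
  · refine Integrable.mono (g := fun x => x ^ (s - 1))
      (intervalIntegral.intervalIntegrable_rpow' (by linarith)).1 hmeas.aestronglyMeasurable ?_
    · filter_upwards [ae_restrict_mem measurableSet_Ioc] with x hx
      have hx0 : (0:ℝ) < x := hx.1
      have hd : 0 < Real.exp x - y := denomPos hy hx0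
      have hxd : x ≤ Real.exp x - y := by
        have := Real.add_one_le_exp x
        linarith
      rw [Real.norm_eq_abs, Real.norm_eq_abs, abs_of_nonneg (by positivity),
        abs_of_nonneg (Real.rpow_nonneg hx0.le _)]
      rw [Real.rpow_sub hx0, Real.rpow_one]
      exact div_le_div_of_nonneg_left (Real.rpow_nonneg hx0.le s) hx0 hxd |>.trans_eq rfl
  · refine Integrable.mono (g := fun x => 2 * (Real.exp (-x) * x ^ (s + 1 - 1)))
      (((Real.GammaIntegral_convergent (by linarith : (0:ℝ) < s + 1)).mono_set
        (Ioi_subset_Ioi (zero_le_one' ℝ))).const_mul 2) hmeas.aestronglyMeasurable ?_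
    filter_upwards [ae_restrict_mem measurableSet_Ioi] with x hx
    have hx1 : (1:ℝ) < x := hx
    have hx0 : (0:ℝ) < x := by linarith
    have hd : 0 < Real.exp x - y := denomPos hy hx0
    have he2 : Real.exp x / 2 ≤ Real.exp x - y := by
      have h2 : (2:ℝ) ≤ Real.exp x := by
        calc (2:ℝ) ≤ Real.exp 1 := by
              have := Real.add_one_le_exp 1; linarith
        _ ≤ Real.exp x := Real.exp_le_exp.mpr hx1.le
      nlinarith [Real.exp_pos x]
    rw [Real.norm_eq_abs, Real.norm_eq_abs, abs_of_nonneg (by positivity),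
      abs_of_nonneg (by positivity)]
    have : x ^ s / (Real.exp x - y) ≤ x ^ s / (Real.exp x / 2) :=
      div_le_div_of_nonneg_left (Real.rpow_nonneg hx0.le s) (by positivity) he2
    calc x ^ s / (Real.exp x - y) ≤ x ^ s / (Real.exp x / 2) := this
      _ = 2 * (Real.exp (-x) * x ^ (s + 1 - 1)) := by
          rw [Real.exp_neg, show s + 1 - 1 = s from by ring]
          field_simp



lemma intPos {s y : ℝ} (hs : 0 < s) (hy : y ≤ 1) :
    0 < ∫ x in Ioi (0:ℝ), x ^ s / (Real.exp x - y) := by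
  have hnn : 0 ≤ᶠ[ae (volume.restrict (Ioi (0:ℝ)))] fun x => x ^ s / (Real.exp x - y) := by
    filter_upwards [ae_restrict_mem measurableSet_Ioi] with x hx
    have hx0 : (0:ℝ) < x := hx
    have := denomPos hy hx0
    positivity
  rw [setIntegral_pos_iff_support_of_nonneg_ae hnn (intLem hs hy)]
  refine lt_of_lt_of_le (b := volume (Ioi (0:ℝ))) (by simp [Real.volume_Ioi]) (measure_mono ?_)
  intro x hx
  refine ⟨?_, hx⟩
  have hx0 : (0:ℝ) < x := hx
  have := denomPos hy hx0
  have := Real.rpow_pos_of_pos hx0 s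
  simp only [Function.mem_support]
  positivity

/-- The polylogarithm, given for `y ≤ 1` by the integral representation
`Li_s(y) = (y/Γ(s)) ∫_0^∞ x^{s-1}/(e^x − y) dx`, which agrees with the power series
`∑_{k=1}^∞ y^k/k^s` for `|y| < 1`. -/
noncomputable def Li (s y : ℝ) : ℝ :=
  y / Real.Gamma s * ∫ x in Set.Ioi (0 : ℝ), x ^ (s - 1) / (Real.exp x - y)

theorem fugacity_equation (z T θ₀ ρ e₀ : ℝ) (hz : 0 < z) (hT : 0 < T) (hθ : θ₀ ≠ 0)
    (hzθ : z * θ₀ ∈ Set.Ico (-1 : ℝ) 0 ∪ Set.Ioi (0 : ℝ))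
    (Mq : (Fin 3 → ℝ) → ℝ)
    (hMq : ∀ v, Mq v = 1 / (z⁻¹ * Real.exp ((∑ d, (v d) ^ 2) / (2 * T)) + θ₀))
    (hmass : ρ = ∫ v, Mq v)
    (henergy : 2 * ρ * e₀ = ∫ v : Fin 3 → ℝ, (∑ d, (v d) ^ 2) * Mq v) :
    |Li (3 / 2) (-(z * θ₀))| ^ ((5 : ℝ) / 2) / |Li (5 / 2) (-(z * θ₀))| ^ ((3 : ℝ) / 2) =
      |θ₀| * ρ * (3 / (4 * π * e₀)) ^ ((3 : ℝ) / 2) := by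
  set y : ℝ := -(z * θ₀) with hy_def
  have hy1 : y ≤ 1 := by
    rcases hzθ with h | h
    · have := h.1; simp only [hy_def]; linarith
    · have : (0:ℝ) < z * θ₀ := h; simp only [hy_def]; linarith
  have hyne : y ≠ 0 := by
    rcases hzθ with h | h
    · have := h.2; simp only [hy_def]; intro hc; nlinarith
    · have : (0:ℝ) < z * θ₀ := h; simp only [hy_def]; intro hc; nlinarith
  -- the two basic integrals
  set A : ℝ := ∫ x in Ioi (0:ℝ), x ^ ((1:ℝ)/2) / (Real.exp x - y) with hA_def
  set B : ℝ := ∫ x in Ioi (0:ℝ), x ^ ((3:ℝ)/2) / (Real.exp x - y) with hB_def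
  have hA : 0 < A := intPos (by norm_num) hy1
  have hB : 0 < B := intPos (by norm_num) hy1
  set P : ℝ := Real.sqrt π with hP_def
  have hPpos : 0 < P := Real.sqrt_pos.mpr Real.pi_pos
  have hP2 : P ^ 2 = π := Real.sq_sqrt Real.pi_nonneg
  -- rewrite Mq
  have hMq' : ∀ v : Fin 3 → ℝ, Mq v =
      (fun x => z / (Real.exp (x / (2*T)) - y)) (∑ d, (v d) ^ 2) := by
    intro v
    rw [hMq v]
    simp only
    have hden : z⁻¹ * Real.exp ((∑ d, (v d) ^ 2) / (2 * T)) + θ₀ =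
        (Real.exp ((∑ d, (v d) ^ 2) / (2 * T)) - y) / z := by
      field_simp [hy_def]; ring
    rw [hden, one_div_div]
  -- mass integral
  have hρ : ρ = 2 * π * ((2*T) ^ ((3:ℝ)/2) * (z * A)) := by
    rw [hmass, integral_congr_ae (Filter.Eventually.of_forall hMq'),
      sph3 (fun x => z / (Real.exp (x / (2*T)) - y)),
      substT ((1:ℝ)/2) T hT (fun w => z / (Real.exp w - y))]
    rw [show (fun w : ℝ => w ^ ((1:ℝ)/2) * (z / (Real.exp w - y))) =
        fun w => z * (w ^ ((1:ℝ)/2) / (Real.exp w - y)) from funext fun w => by ring,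
      integral_const_mul]
    norm_num
    exact Or.inl (Or.inl rfl)
  -- energy integral
  have hE : 2 * ρ * e₀ = 2 * π * ((2*T) ^ ((5:ℝ)/2) * (z * B)) := by
    rw [henergy,
      integral_congr_ae (Filter.Eventually.of_forall (fun v => by rw [hMq' v]) :
        ∀ᵐ v : Fin 3 → ℝ, (∑ d, (v d) ^ 2) * Mq v =
          (fun x => x * (z / (Real.exp (x / (2*T)) - y))) (∑ d, (v d) ^ 2)),
      sph3 (fun x => x * (z / (Real.exp (x / (2*T)) - y)))]
    have hcongr : ∫ x in Ioi (0:ℝ), x ^ ((1:ℝ)/2) * (x * (z / (Real.exp (x / (2*T)) - y))) =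
        ∫ x in Ioi (0:ℝ), x ^ ((3:ℝ)/2) * (z / (Real.exp (x / (2*T)) - y)) := by
      refine setIntegral_congr_fun measurableSet_Ioi fun x hx => ?_
      have hx0 : (0:ℝ) < x := hx
      have : x ^ ((3:ℝ)/2) = x ^ ((1:ℝ)/2) * x := by
        rw [show (3:ℝ)/2 = 1/2 + 1 from by norm_num, Real.rpow_add hx0, Real.rpow_one]
      rw [this]; ring
    rw [hcongr, substT ((3:ℝ)/2) T hT (fun w => z / (Real.exp w - y))]
    rw [show (fun w : ℝ => w ^ ((3:ℝ)/2) * (z / (Real.exp w - y))) =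
        fun w => z * (w ^ ((3:ℝ)/2) / (Real.exp w - y)) from funext fun w => by ring,
      integral_const_mul]
    norm_num
    exact Or.inl (Or.inl rfl)
  -- positivity
  have h2T : (0:ℝ) < 2*T := by linarith
  have hQpos : (0:ℝ) < (2*T) ^ ((3:ℝ)/2) := Real.rpow_pos_of_pos h2T _
  have hρpos : 0 < ρ := by rw [hρ]; positivity
  have he₀ : e₀ = T * B / A := by
    have h52 : (2*T) ^ ((5:ℝ)/2) = (2*T) ^ ((3:ℝ)/2) * (2*T) := by
      rw [show (5:ℝ)/2 = 3/2 + 1 from by norm_num, Real.rpow_add h2T, Real.rpow_one]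
    rw [hρ] at hE
    rw [h52] at hE
    have := hE
    field_simp at this ⊢
    nlinarith [Real.pi_pos, hQpos, hA, hz]
  have he₀pos : 0 < e₀ := by rw [he₀]; positivity
  -- Gamma values
  have hΓ3 : Real.Gamma ((3:ℝ)/2) = P / 2 := by
    rw [show (3:ℝ)/2 = 1/2 + 1 from by norm_num, Real.Gamma_add_one (by norm_num),
      Real.Gamma_one_half_eq]
    ring
  have hΓ5 : Real.Gamma ((5:ℝ)/2) = 3 * P / 4 := by
    rw [show (5:ℝ)/2 = 3/2 + 1 from by norm_num, Real.Gamma_add_one (by norm_num), hΓ3]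
    ring
  -- |y|
  have hyabs : |y| = z * |θ₀| := by
    rw [hy_def, abs_neg, abs_mul, abs_of_pos hz]
  -- Li values
  have hLi3 : |Li (3/2) y| = 2 * (z * |θ₀|) * A / P := by
    unfold Li
    rw [show (3:ℝ)/2 - 1 = 1/2 from by norm_num, ← hA_def, hΓ3, abs_mul, abs_div,
      abs_of_pos (by positivity : (0:ℝ) < P/2), abs_of_pos hA, hyabs]
    field_simp
  have hLi5 : |Li (5/2) y| = 4 * (z * |θ₀|) * B / (3 * P) := by
    unfold Li
    rw [show (5:ℝ)/2 - 1 = 3/2 from by norm_num, ← hB_def, hΓ5, abs_mul, abs_div,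
      abs_of_pos (by positivity : (0:ℝ) < 3*P/4), abs_of_pos hB, hyabs]
    field_simp
  -- squares
  set L3 : ℝ := |Li (3/2) y|
  set L5 : ℝ := |Li (5/2) y|
  have hL3nn : 0 ≤ L3 := abs_nonneg _
  have hL5nn : 0 ≤ L5 := abs_nonneg _
  have hCpos : (0:ℝ) < 3 / (4 * π * e₀) := by positivity
  have hLHSnn : 0 ≤ L3 ^ ((5:ℝ)/2) / L5 ^ ((3:ℝ)/2) := by positivity
  have hRHSnn : 0 ≤ |θ₀| * ρ * (3 / (4 * π * e₀)) ^ ((3:ℝ)/2) := by positivity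
  have hsq : (L3 ^ ((5:ℝ)/2) / L5 ^ ((3:ℝ)/2)) ^ 2 =
      (|θ₀| * ρ * (3 / (4 * π * e₀)) ^ ((3:ℝ)/2)) ^ 2 := by
    have e1 : (L3 ^ ((5:ℝ)/2) / L5 ^ ((3:ℝ)/2)) ^ 2 = L3 ^ (5:ℕ) / L5 ^ (3:ℕ) := by
      rw [div_pow, ← Real.rpow_natCast (L3 ^ ((5:ℝ)/2)) 2,
        ← Real.rpow_natCast (L5 ^ ((3:ℝ)/2)) 2,
        ← Real.rpow_mul hL3nn, ← Real.rpow_mul hL5nn]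
      norm_num
    have e2 : (|θ₀| * ρ * (3 / (4 * π * e₀)) ^ ((3:ℝ)/2)) ^ 2 =
        |θ₀| ^ 2 * ρ ^ 2 * (3 / (4 * π * e₀)) ^ (3:ℕ) := by
      rw [mul_pow, mul_pow, ← Real.rpow_natCast ((3 / (4 * π * e₀)) ^ ((3:ℝ)/2)) 2,
        ← Real.rpow_mul hCpos.le]
      norm_num
    rw [e1, e2, hLi3, hLi5, hρ, he₀]
    have hQ2 : ((2*T) ^ ((3:ℝ)/2)) ^ 2 = (2*T) ^ (3:ℕ) := by
      rw [← Real.rpow_natCast ((2*T) ^ ((3:ℝ)/2)) 2, ← Real.rpow_mul h2T.le]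
      norm_num
    have hρ2 : ((2*T) ^ ((3:ℝ)/2) * (z * A)) ^ 2 = (2*T) ^ (3:ℕ) * (z * A) ^ 2 := by
      rw [mul_pow, hQ2]
    rw [← hP2, mul_pow, mul_pow, hρ2]
    have hPne : P ≠ 0 := hPpos.ne'
    have hAne : A ≠ 0 := hA.ne'
    have hBne : B ≠ 0 := hB.ne'
    have hTne : T ≠ 0 := hT.ne'
    have hzne : z ≠ 0 := hz.ne'
    have habsθ : |θ₀| ≠ 0 := abs_ne_zero.mpr hθ
    field_simp
  calc L3 ^ ((5:ℝ)/2) / L5 ^ ((3:ℝ)/2)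
      = Real.sqrt ((L3 ^ ((5:ℝ)/2) / L5 ^ ((3:ℝ)/2)) ^ 2) := (Real.sqrt_sq hLHSnn).symm
    _ = Real.sqrt ((|θ₀| * ρ * (3 / (4 * π * e₀)) ^ ((3:ℝ)/2)) ^ 2) := by rw [hsq]
    _ = |θ₀| * ρ * (3 / (4 * π * e₀)) ^ ((3:ℝ)/2) := Real.sqrt_sq hRHSnn
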